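/- For every n ∈ ℕ and all u, v ∈ ℂ with |u|² + |v|² = 1, the matrix Mⁿ(u,v) is unitary, i.e., Mⁿ(u,v) · (Mⁿ(u,v))† = 1. -/

import Mathlib

open Matrix Finset

/-- The polynomial parametrization `U^{(j)}` (with `j = n/2`, index `k = j - m`) of the
spin-`j` rotation matrix, as an `(n+1)×(n+1)` complex matrix depending on `u, v ∈ ℂ`. -/
noncomputable def Mrep (n : ℕ) (u v : ℂ) : Matrix (Fin (n + 1)) (Fin (n + 1)) ℂ :=
  Matrix.of fun k' k =>
    (Real.sqrt ((n.choose (k : ℕ) : ℝ) / (n.choose (k' : ℕ) : ℝ)) : ℂ) *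
      ∑ a ∈ Finset.Icc (max 0 ((k : ℕ) - (k' : ℕ))) (min (k : ℕ) (n - (k' : ℕ))),
        ((k : ℕ).choose a : ℂ) * ((n - (k : ℕ)).choose ((k' : ℕ) + a - (k : ℕ)) : ℂ) *
          (-1 : ℂ) ^ a * u ^ (n - (k' : ℕ) - a) * (starRingEnd ℂ u) ^ ((k : ℕ) - a) *
          v ^ ((k' : ℕ) + a - (k : ℕ)) * (starRingEnd ℂ v) ^ a

section Aux

set_option maxRecDepth 4000

open Polynomial

/-- The inner (unnormalized) sum appearing in the entries of `Mrep`. -/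
noncomputable def Acoef (n k' k : ℕ) (u v : ℂ) : ℂ :=
  ∑ a ∈ Finset.Icc (max 0 (k - k')) (min k (n - k')),
    (k.choose a : ℂ) * ((n - k).choose (k' + a - k) : ℂ) *
      (-1 : ℂ) ^ a * u ^ (n - k' - a) * (starRingEnd ℂ u) ^ (k - a) *
      v ^ (k' + a - k) * (starRingEnd ℂ v) ^ a

lemma coeff_linear_pow {R : Type*} [CommRing R] (a b : R) (M i : ℕ) :
    Polynomial.coeff ((C a * X + C b) ^ M) i
      = if i ≤ M then (M.choose i : R) * a ^ i * b ^ (M - i) else 0 := by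
  rw [add_pow, finset_sum_coeff]
  have h : ∀ k, (C a * X) ^ k * C b ^ (M - k) * (M.choose k : R[X])
      = C ((M.choose k : R) * a ^ k * b ^ (M - k)) * X ^ k := by
    intro k; rw [C_mul, C_mul, C_pow, C_pow, C_eq_natCast]; ring
  simp only [h, coeff_C_mul_X_pow]
  rw [Finset.sum_ite_eq (range (M + 1)) i]
  simp [Nat.lt_succ_iff]

lemma coeff_prod_linear_pow {R : Type*} [CommRing R] (r s p q : R) {n k' k : ℕ}
    (hk' : k' ≤ n) (hk : k ≤ n) :
    Polynomial.coeff ((C r * X + C s) ^ k * (C p * X + C q) ^ (n - k)) (n - k')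
      = ∑ a ∈ Finset.Icc (max 0 (k - k')) (min k (n - k')),
          (k.choose a : R) * ((n - k).choose (k' + a - k) : R) *
            r ^ a * s ^ (k - a) * p ^ (n - k' - a) * q ^ (k' + a - k) := by
  rw [coeff_mul, Finset.Nat.sum_antidiagonal_eq_sum_range_succ
    (fun a b => coeff ((C r * X + C s) ^ k) a * coeff ((C p * X + C q) ^ (n - k)) b)]
  rw [eq_comm]
  apply Finset.sum_subset_zero_on_sdiff
  · intro a ha
    rw [Finset.mem_Icc] at ha
    rw [Finset.mem_range]
    omega
  · intro a ha
    rw [Finset.mem_sdiff, Finset.mem_range, Finset.mem_Icc] at ha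
    obtain ⟨h1, h2⟩ := ha
    rw [coeff_linear_pow, coeff_linear_pow]
    rw [not_and_or] at h2
    rcases h2 with h2 | h2
    · rw [if_neg (show ¬(n - k' - a ≤ n - k) by omega)]; ring
    · rw [if_neg (show ¬(a ≤ k) by omega)]; ring
  · intro a ha
    rw [Finset.mem_Icc] at ha
    rw [coeff_linear_pow, coeff_linear_pow, if_pos (by omega), if_pos (by omega)]
    have e3 : n - k' - a = (n - k) - (k' + a - k) := by omega
    have e4 : n - k - (n - k' - a) = k' + a - k := by omega
    have e5 : (n - k).choose (n - k' - a) = (n - k).choose (k' + a - k) := by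
      rw [e3, Nat.choose_symm (by omega)]
    rw [e4, e5]
    ring

lemma Acoef_eq_coeff {n k' k : ℕ} (hk' : k' ≤ n) (hk : k ≤ n) (u v : ℂ) :
    Acoef n k' k u v
      = Polynomial.coeff ((C (-(starRingEnd ℂ v)) * X + C (starRingEnd ℂ u)) ^ k
          * (C u * X + C v) ^ (n - k)) (n - k') := by
  rw [coeff_prod_linear_pow _ _ _ _ hk' hk, Acoef]
  refine Finset.sum_congr rfl fun a _ => ?_
  rw [neg_pow]
  ring

lemma conj_Acoef_eq_coeff {n k' k : ℕ} (hk' : k' ≤ n) (hk : k ≤ n) (u v : ℂ) :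
    starRingEnd ℂ (Acoef n k' k u v)
      = Polynomial.coeff ((C (-v) * X + C u) ^ k
          * (C (starRingEnd ℂ u) * X + C (starRingEnd ℂ v)) ^ (n - k)) (n - k') := by
  rw [coeff_prod_linear_pow _ _ _ _ hk' hk, Acoef, _root_.map_sum]
  refine Finset.sum_congr rfl fun a _ => ?_
  simp only [_root_.map_mul, _root_.map_pow, _root_.map_natCast, _root_.map_neg, _root_.map_one, Complex.conj_conj]
  rw [neg_pow, neg_pow]
  ring

/-- The key combinatorial orthogonality identity, proved by extracting coefficients from
the polynomial identity `∑ₖ C(n,k) pₖ(x) q̄ₖ(z) = (xz+1)ⁿ` in `ℂ[X][X]`. -/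
lemma key_sum (n k' k'' : ℕ) (hk' : k' ≤ n) (hk'' : k'' ≤ n) (u v : ℂ)
    (h1 : u * starRingEnd ℂ u + v * starRingEnd ℂ v = 1) :
    ∑ k ∈ range (n + 1),
        (n.choose k : ℂ) * Acoef n k' k u v * starRingEnd ℂ (Acoef n k'' k u v)
      = if k' = k'' then (n.choose k' : ℂ) else 0 := by
  set cu := starRingEnd ℂ u with hcu
  set cv := starRingEnd ℂ v with hcv
  let R := Polynomial ℂ
  let S := Polynomial R
  let p1 : R := C (-cv) * X + C cu
  let p2 : R := C u * X + C v
  let w1 : S := C (C (-v)) * X + C (C u)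
  let w2 : S := C (C cu) * X + C (C cv)
  let a : S := C p1 * w1
  let b : S := C p2 * w2
  have hc : (C (C u) * C (C cu) + C (C v) * C (C cv) : S) = 1 := by
    rw [show (C (C u) * C (C cu) + C (C v) * C (C cv) : S)
        = C (C (u * cu + v * cv)) by simp [_root_.map_add, _root_.map_mul], h1, _root_.map_one, _root_.map_one]
  have hab : a + b = C X * X + 1 := by
    simp only [a, b, p1, p2, w1, w2, _root_.map_add, _root_.map_mul, _root_.map_neg]
    linear_combination (C X * (X : S) + 1) * hc
  have main : ∑ k ∈ range (n + 1),
        (n.choose k : ℂ) * Acoef n k' k u v * starRingEnd ℂ (Acoef n k'' k u v)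
      = Polynomial.coeff (Polynomial.coeff (((C X * X + 1 : S)) ^ n) (n - k'')) (n - k') := by
    rw [← hab, add_pow, finset_sum_coeff, finset_sum_coeff]
    refine Finset.sum_congr rfl fun k hk => ?_
    rw [Finset.mem_range, Nat.lt_succ_iff] at hk
    have ht : a ^ k * b ^ (n - k) * ((n.choose k : ℕ) : S)
        = C (p1 ^ k * p2 ^ (n - k) * C ((n.choose k : ℕ) : ℂ)) * (w1 ^ k * w2 ^ (n - k)) := by
      simp only [a, b, mul_pow, _root_.map_mul, _root_.map_pow, C_eq_natCast]
      ring
    rw [ht, coeff_C_mul]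
    have hw : (w1 ^ k * w2 ^ (n - k) : S)
        = Polynomial.map (C : ℂ →+* R)
            ((C (-v) * X + C u) ^ k * (C cu * X + C cv) ^ (n - k)) := by
      simp only [w1, w2, Polynomial.map_mul, Polynomial.map_pow, Polynomial.map_add,
        Polynomial.map_C, Polynomial.map_X]
    rw [hw, Polynomial.coeff_map, ← conj_Acoef_eq_coeff hk'' hk]
    rw [show (p1 ^ k * p2 ^ (n - k) * C ((n.choose k : ℕ) : ℂ))
          * C (starRingEnd ℂ (Acoef n k'' k u v))
        = (p1 ^ k * p2 ^ (n - k))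
          * C (((n.choose k : ℕ) : ℂ) * starRingEnd ℂ (Acoef n k'' k u v)) by
      rw [C_mul]; ring]
    rw [coeff_mul_C, ← Acoef_eq_coeff hk' hk]
    ring
  rw [main]
  rw [show ((C X * X + 1 : S)) ^ n = (C X * X + C (1 : R)) ^ n by rw [_root_.map_one]]
  rw [coeff_linear_pow, if_pos (Nat.sub_le n k''), one_pow, mul_one,
    ← C_eq_natCast, coeff_C_mul, coeff_X_pow]
  by_cases hkk : k' = k''
  · subst hkk
    rw [if_pos rfl, if_pos rfl, mul_one, Nat.choose_symm hk']
  · rw [if_neg (by omega), if_neg hkk, mul_zero]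

end Aux

/-- For every `n` and all `u, v` with `|u|² + |v|² = 1`, the matrix
`Mⁿ(u,v)` is unitary: `Mⁿ(u,v) · (Mⁿ(u,v))† = 1`. -/
theorem Mrep_unitary (n : ℕ) (u v : ℂ)
    (h : ‖u‖ ^ 2 + ‖v‖ ^ 2 = 1) :
    Mrep n u v * (Mrep n u v)ᴴ = 1 := by
  have h1 : u * starRingEnd ℂ u + v * starRingEnd ℂ v = 1 := by
    rw [Complex.mul_conj, Complex.mul_conj, ← Complex.ofReal_add, ← Complex.sq_norm,
      ← Complex.sq_norm, h, Complex.ofReal_one]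
  have entry : ∀ (a b : Fin (n + 1)), Mrep n u v a b
      = ((Real.sqrt ((n.choose (b : ℕ) : ℝ) / (n.choose (a : ℕ) : ℝ)) : ℝ) : ℂ)
        * Acoef n (a : ℕ) (b : ℕ) u v := fun _ _ => rfl
  ext k' k''
  rw [Matrix.mul_apply, Matrix.one_apply]
  simp only [Matrix.conjTranspose_apply, entry]
  have hterm : ∀ k : Fin (n + 1),
      ((Real.sqrt ((n.choose (k : ℕ) : ℝ) / (n.choose (k' : ℕ) : ℝ)) : ℝ) : ℂ)
          * Acoef n (k' : ℕ) (k : ℕ) u v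
        * star (((Real.sqrt ((n.choose (k : ℕ) : ℝ) / (n.choose (k'' : ℕ) : ℝ)) : ℝ) : ℂ)
          * Acoef n (k'' : ℕ) (k : ℕ) u v)
      = ((Real.sqrt ((n.choose (k' : ℕ) : ℝ)) : ℝ) : ℂ)⁻¹
          * ((Real.sqrt ((n.choose (k'' : ℕ) : ℝ)) : ℝ) : ℂ)⁻¹
          * ((n.choose (k : ℕ) : ℂ) * Acoef n (k' : ℕ) (k : ℕ) u v
              * starRingEnd ℂ (Acoef n (k'' : ℕ) (k : ℕ) u v)) := by
    intro k
    have hr : Real.sqrt ((n.choose (k : ℕ) : ℝ) / (n.choose (k' : ℕ) : ℝ))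
        * Real.sqrt ((n.choose (k : ℕ) : ℝ) / (n.choose (k'' : ℕ) : ℝ))
        = (Real.sqrt ((n.choose (k' : ℕ) : ℝ)))⁻¹ * (Real.sqrt ((n.choose (k'' : ℕ) : ℝ)))⁻¹
          * (n.choose (k : ℕ) : ℝ) := by
      rw [Real.sqrt_div (by positivity), Real.sqrt_div (by positivity),
        div_mul_div_comm, Real.mul_self_sqrt (Nat.cast_nonneg _)]
      ring
    have hrC : ((Real.sqrt ((n.choose (k : ℕ) : ℝ) / (n.choose (k' : ℕ) : ℝ)) : ℝ) : ℂ)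
        * ((Real.sqrt ((n.choose (k : ℕ) : ℝ) / (n.choose (k'' : ℕ) : ℝ)) : ℝ) : ℂ)
        = ((Real.sqrt ((n.choose (k' : ℕ) : ℝ)) : ℝ) : ℂ)⁻¹
          * ((Real.sqrt ((n.choose (k'' : ℕ) : ℝ)) : ℝ) : ℂ)⁻¹ * (n.choose (k : ℕ) : ℂ) := by
      rw [← Complex.ofReal_mul, hr]
      push_cast
      ring
    rw [star_mul', Complex.star_def, Complex.conj_ofReal]
    linear_combination
      (Acoef n (k' : ℕ) (k : ℕ) u v * starRingEnd ℂ (Acoef n (k'' : ℕ) (k : ℕ) u v)) * hrC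
  simp only [hterm]
  rw [← Finset.mul_sum]
  rw [Fin.sum_univ_eq_sum_range (fun k => (n.choose k : ℂ) * Acoef n (k' : ℕ) k u v
    * starRingEnd ℂ (Acoef n (k'' : ℕ) k u v))]
  rw [key_sum n (k' : ℕ) (k'' : ℕ) (Fin.is_le k') (Fin.is_le k'') u v h1]
  have hne : ∀ m : ℕ, m ≤ n → ((Real.sqrt ((n.choose m : ℝ)) : ℝ) : ℂ) ≠ 0 := by
    intro m hm
    have : (0 : ℝ) < Real.sqrt ((n.choose m : ℝ)) :=
      Real.sqrt_pos.mpr (by exact_mod_cast Nat.choose_pos hm)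
    exact_mod_cast this.ne'
  by_cases hkk : k' = k''
  · subst hkk
    rw [if_pos rfl, if_pos rfl]
    have hcc : ((Real.sqrt ((n.choose (k' : ℕ) : ℝ)) : ℝ) : ℂ)
        * ((Real.sqrt ((n.choose (k' : ℕ) : ℝ)) : ℝ) : ℂ) = ((n.choose (k' : ℕ) : ℕ) : ℂ) := by
      rw [← Complex.ofReal_mul, Real.mul_self_sqrt (Nat.cast_nonneg _)]
      push_cast
      ring
    have h0 := hne (k' : ℕ) (Fin.is_le k')
    field_simp
    linear_combination hcc.symm
  · rw [if_neg (fun hc => hkk (Fin.ext hc)), if_neg hkk, mul_zero]
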